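/- For any c-cluster I of Q_c, the root configuration R(I) = (r(I,i))_{i∈I} is a linear basis of V = ℝⁿ, and its elements are pairwise distinct. -/

import Mathlib

open scoped Classical

noncomputable section

namespace CP

variable {B : Type} [DecidableEq B] [Fintype B] [Nonempty B]
variable {W : Type} [Group W]

/-- An arbitrary element of `B`, used as a junk value for `List.getD`. -/
def arb (B : Type) [Nonempty B] : B := Classical.arbitrary B

/-- The bilinear form of the standard geometric representation of a Coxeter system:
`⟨αᵢ, αⱼ⟩ = -cos (π / Mᵢⱼ)`, extended bilinearly. -/
def bil (M : CoxeterMatrix B) (u v : B → ℝ) : ℝ :=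
  ∑ i, ∑ j, u i * v j * (-(Real.cos (Real.pi / (M i j))))

/-- The simple roots: the standard basis vectors of `V = ℝ^B`. -/
def sroot (i : B) : B → ℝ := Pi.single i 1

/-- The root system: the orbit of the simple roots under `W`. -/
def rootSystem (π : Representation ℝ W (B → ℝ)) : Set (B → ℝ) :=
  {v | ∃ (w : W) (i : B), v = π w (sroot i)}

/-- The positive roots: roots with non-negative coordinates on the simple roots. -/
def posRoots (π : Representation ℝ W (B → ℝ)) : Set (B → ℝ) :=
  {v ∈ rootSystem π | ∀ i, 0 ≤ v i}

/-- The almost positive roots: positive roots plus negatives of simple roots. -/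
def almostPos (π : Representation ℝ W (B → ℝ)) : Set (B → ℝ) :=
  posRoots π ∪ Set.range (fun i => -sroot i)

variable {M : CoxeterMatrix B}

/-- `l` is a reduced word for `w`. -/
def IsRW (cs : CoxeterSystem M W) (w : W) (l : List B) : Prop :=
  cs.wordProd l = w ∧ l.length = cs.length w

/-- The letter of the infinite word `c^∞` at position `t` (`0`-indexed). -/
def cInf [Nonempty B] (cword : List B) (t : ℕ) : B := cword.getD (t % cword.length) (arb B)

/-- `f ≤ g` in the lexicographic order on sequences of positions. -/
def LexLE {N : ℕ} (f g : Fin N → ℕ) : Prop :=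
  f = g ∨ ∃ k, (∀ l, l < k → f l = g l) ∧ f k < g k

/-- The subword of `Q` indexed by the complement of `I` (positions are `0`-indexed). -/
def complWord [Nonempty B] (Q : List B) (I : Finset ℕ) : List B :=
  ((List.range Q.length).filter (· ∉ I)).map (fun k => Q.getD k (arb B))

/-- `I` is a `c`-cluster of the word `Q`: the complementary subword is a reduced word
for the longest element `w₀`. -/
def IsCluster (cs : CoxeterSystem M W) (w₀ : W) (Q : List B) (I : Finset ℕ) : Prop :=
  I ⊆ Finset.range Q.length ∧ IsRW cs w₀ (complWord Q I)

/-- The root function `r(I, j)`. -/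
def rootFn (cs : CoxeterSystem M W) (π : Representation ℝ W (B → ℝ))
    (Q : List B) (I : Finset ℕ) (j : ℕ) : B → ℝ :=
  π (cs.wordProd (((List.range j).filter (· ∉ I)).map (fun x => Q.getD x (arb B))))
    (sroot (Q.getD j (arb B)))

/-- `ρ` is a family of coefficients expanding `r(I, j)` on the root configuration
`R(I) = (r(I, i))_{i ∈ I}`. -/
def IsExpansion (cs : CoxeterSystem M W) (π : Representation ℝ W (B → ℝ))
    (Q : List B) (I : Finset ℕ) (j : ℕ) (ρ : ℕ → ℝ) : Prop :=
  rootFn cs π Q I j = ∑ i ∈ I, ρ i • rootFn cs π Q I i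

/-- The rotation map `τ_c` on positions of the word `Q` (`0`-indexed): the position of the next
occurrence of the letter `q_i` if it exists, and the first occurrence of `η (q_i) = w₀ q_i w₀`
otherwise. -/
def rot [Nonempty B] (Q : List B) (η : B → B) (i : ℕ) : ℕ :=
  if h : ∃ j, j < Q.length ∧ i < j ∧ Q.getD j (arb B) = Q.getD i (arb B) then Nat.find h
  else if h2 : ∃ j, j < Q.length ∧ Q.getD j (arb B) = η (Q.getD i (arb B)) then Nat.find h2
  else i

/-- The map `ϑ_c` from positions of the word `Q_c = cword ++ sw` to almost positive roots. -/
def theta (cs : CoxeterSystem M W) (π : Representation ℝ W (B → ℝ))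
    (cword sw : List B) (i : ℕ) : B → ℝ :=
  if i < cword.length then -sroot (cword.getD i (arb B))
  else π (cs.wordProd (sw.take (i - cword.length))) (sroot (sw.getD (i - cword.length) (arb B)))

/-- The rotation map `τ_c` on almost positive roots. -/
def rotRoot (cs : CoxeterSystem M W) (π : Representation ℝ W (B → ℝ))
    (cword : List B) (v : B → ℝ) : B → ℝ :=
  if h : ∃ k : Fin cword.length, v = -sroot (cword.get k) then
    π (cs.wordProd (cword.take (Classical.choose h).1)) (sroot (cword.get (Classical.choose h)))
  else if h2 : ∃ k : Fin cword.length,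
      v = π (cs.wordProd (cword.drop ((k : ℕ) + 1)).reverse) (sroot (cword.get k)) then
    -sroot (cword.get (Classical.choose h2))
  else π (cs.wordProd cword) v

/-- One elementary commutation of two consecutive commuting letters. -/
def CommStep (cs : CoxeterSystem M W) (u v : List B) : Prop :=
  ∃ (x y : List B) (s t : B), cs.simple s * cs.simple t = cs.simple t * cs.simple s ∧
    u = x ++ s :: t :: y ∧ v = x ++ t :: s :: y

/-- The cyclic shift on positions accompanying the jump of the first letter of a word with
`m` letters: `σ(k) = k - 1` for `k ≥ 1`, and `σ(0) = m - 1` (positions are `0`-indexed). -/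
def shift (m : ℕ) (k : ℕ) : ℕ := if k = 0 then m - 1 else k - 1


set_option linter.unusedSectionVars false

section EXCHANGE
variable {M : CoxeterMatrix B}

namespace Ex

open CoxeterSystem List

variable (cs : CoxeterSystem M W)

local prefix:100 "ss" => cs.simple
local prefix:100 "π" => cs.wordProd
local prefix:100 "ris" => cs.rightInvSeq
local prefix:100 "ℓ" => cs.length

/-- The sign-flipping conjugation map on `W × ℤˣ`. -/
def fl (i : B) : W × ℤˣ → W × ℤˣ :=
  fun x => (ss i * x.1 * ss i, if x.1 = ss i then -x.2 else x.2)

theorem fl_invol (i : B) : Function.Involutive (fl cs i) := by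
  rintro ⟨t, ε⟩
  unfold fl
  by_cases h : t = ss i
  · subst h
    simp [cs.simple_mul_simple_self, mul_assoc]
  · have h2 : ss i * t * ss i ≠ ss i := by
      intro hc
      apply h
      have := congrArg (fun z => ss i * z * ss i) hc
      simpa [mul_assoc, cs.simple_mul_simple_cancel_left,
        cs.simple_mul_simple_cancel_right] using this
    simp only [h, if_neg, h2]
    simp [mul_assoc, cs.simple_mul_simple_cancel_left, cs.simple_mul_simple_cancel_right, h, h2]

/-- The sign-flipping permutation of `W × ℤˣ` associated to a simple reflection. -/
def rp (i : B) : Equiv.Perm (W × ℤˣ) := Function.Involutive.toPerm (fl cs i) (fl_invol cs i)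

theorem rp_apply (i : B) (x : W × ℤˣ) : rp cs i x = fl cs i x := rfl

theorem wact (ω : List B) (t : W) (ε : ℤˣ) :
    ((ω.map (rp cs)).prod) (t, ε) =
      (π ω * t * (π ω)⁻¹, (-1 : ℤˣ) ^ ((ris ω).count t) * ε) := by
  induction ω generalizing t ε with
  | nil => simp
  | cons i ω ih =>
    rw [List.map_cons, List.prod_cons, Equiv.Perm.mul_apply, ih, rp_apply]
    unfold fl
    have hris : ris (i :: ω) = ((π ω)⁻¹ * (ss i) * (π ω)) :: ris ω := rfl
    dsimp only
    have hcond : (π ω * t * (π ω)⁻¹ = ss i) ↔ (t = (π ω)⁻¹ * ss i * π ω) := by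
      constructor
      · intro h; rw [← h]; group
      · intro h; rw [h]; group
    refine Prod.ext ?_ ?_
    · show ss i * (π ω * t * (π ω)⁻¹) * ss i = π (i :: ω) * t * (π (i :: ω))⁻¹
      rw [cs.wordProd_cons]
      rw [mul_inv_rev, cs.inv_simple]
      group
    · show (if π ω * t * (π ω)⁻¹ = ss i then -((-1 : ℤˣ) ^ ((ris ω).count t) * ε)
        else (-1 : ℤˣ) ^ ((ris ω).count t) * ε) = _
      rw [hris, List.count_cons]
      simp only [beq_iff_eq]
      by_cases h : t = (π ω)⁻¹ * ss i * π ω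
      · rw [if_pos (hcond.mpr h), if_pos h.symm, pow_succ, mul_neg_one, neg_mul]
      · rw [if_neg (fun hc => h (hcond.mp hc)), if_neg (fun hc => h hc.symm), add_zero]

theorem prod_map_alt {N : Type*} [Monoid N] (f : B → N) (i j : B) (m : ℕ) :
    ((alternatingWord i j (2 * m)).map f).prod = (f i * f j) ^ m := by
  induction m with
  | zero => simp [alternatingWord]
  | succ m ih =>
    have h2 : 2 * (m + 1) = (2 * m + 1) + 1 := by ring
    rw [h2, alternatingWord_succ', alternatingWord_succ']
    have he1 : ¬ Even (2 * m + 1) := by simp [Nat.even_add_one]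
    have he2 : Even (2 * m) := even_two_mul m
    rw [if_neg he1, if_pos he2]
    rw [List.map_cons, List.map_cons, List.prod_cons, List.prod_cons, ih, pow_succ']
    rw [mul_assoc]

/-- `b * c^k = (c^k)⁻¹ * b` in the dihedral subgroup. -/
theorem simple_mul_pow (i j : B) (k : ℕ) :
    ss j * (ss i * ss j) ^ k = ((ss i * ss j) ^ k)⁻¹ * ss j := by
  induction k with
  | zero => simp
  | succ k ih =>
    have key : ss j * (ss i * ss j) = (ss i * ss j)⁻¹ * ss j := by
      rw [mul_inv_rev, cs.inv_simple, cs.inv_simple, mul_assoc]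
    rw [pow_succ, ← mul_assoc, ih, mul_assoc, key, ← mul_assoc, ← mul_inv_rev, ← pow_succ',
      pow_succ]

/-- The reflections appearing in the inversion sequence of an alternating word. -/
def TT (i j : B) (r : ℕ) : W := ss j * (ss i * ss j) ^ r

theorem wordProd_alt_succ (i j : B) (n : ℕ) :
    π (alternatingWord i j (n + 1)) = π (alternatingWord i j n) * TT cs i j n := by
  unfold TT
  rw [cs.prod_alternatingWord_eq_mul_pow, cs.prod_alternatingWord_eq_mul_pow]
  rcases Nat.even_or_odd n with he | ho
  · obtain ⟨l, rfl⟩ := he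
    have h1 : ¬ Even (l + l + 1) := by
      simp only [Nat.even_add_one, not_not]
      exact ⟨l, rfl⟩
    rw [if_neg h1, if_pos ⟨l, rfl⟩, one_mul]
    have d1 : (l + l + 1) / 2 = l := by omega
    have d2 : (l + l) / 2 = l := by omega
    rw [d1, d2, simple_mul_pow cs i j l, simple_mul_pow cs i j (l + l), pow_add]
    group
  · obtain ⟨l, hl⟩ := ho
    subst hl
    have h1 : Even (2 * l + 1 + 1) := ⟨l + 1, by ring⟩
    have h0 : ¬ Even (2 * l + 1) := by
      simp only [Nat.even_add_one, not_not]
      exact ⟨l, by ring⟩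
    rw [if_neg h0, if_pos h1, one_mul]
    have d1 : (2 * l + 1) / 2 = l := by omega
    have d2 : (2 * l + 1 + 1) / 2 = l + 1 := by omega
    rw [d1, d2, simple_mul_pow cs i j l, mul_assoc, cs.simple_mul_simple_cancel_left,
      show 2 * l + 1 = l + (l + 1) by ring, pow_add]
    group

theorem ris_alt (i j : B) (n : ℕ) :
    ris (alternatingWord i j n) = ((List.range n).reverse).map (TT cs i j) := by
  induction n with
  | zero => simp [alternatingWord]
  | succ n ih =>
    rw [alternatingWord_succ']
    have hhd : ris ((if Even n then j else i) :: alternatingWord i j n) =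
        ((π (alternatingWord i j n))⁻¹ * (ss (if Even n then j else i)) *
          (π (alternatingWord i j n))) :: ris (alternatingWord i j n) := rfl
    rw [hhd, ih]
    have hrange : (List.range (n+1)).reverse = n :: (List.range n).reverse := by
      rw [List.range_succ, List.reverse_append]
      simp
    rw [hrange, List.map_cons]
    congr 1
    have hw : ss (if Even n then j else i) * π (alternatingWord i j n)
        = π (alternatingWord i j (n+1)) := by
      rw [alternatingWord_succ', cs.wordProd_cons]
    rw [mul_assoc, hw, wordProd_alt_succ cs i j n, inv_mul_cancel_left]

theorem TT_period (i j : B) (r : ℕ) : TT cs i j (M i j + r) = TT cs i j r := by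
  unfold TT
  rw [pow_add, cs.simple_mul_simple_pow, one_mul]

theorem count_ris_alt_even (i j : B) (t : W) :
    Even ((ris (alternatingWord i j (2 * M i j))).count t) := by
  rw [ris_alt]
  rw [List.map_reverse, List.count_reverse]
  have h2 : 2 * M i j = M i j + M i j := by ring
  rw [h2, List.range_add, List.map_append, List.count_append]
  have : List.map (TT cs i j) (List.map (fun x => M i j + x) (List.range (M i j)))
      = List.map (TT cs i j) (List.range (M i j)) := by
    rw [List.map_map]
    apply List.map_congr_left
    intro a _
    exact TT_period cs i j a
  rw [this]
  exact ⟨_, rfl⟩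

theorem braid : M.IsLiftable (rp cs) := by
  intro i j
  apply Equiv.ext
  rintro ⟨t, ε⟩
  have h1 : ((rp cs i * rp cs j) ^ M i j) =
      ((alternatingWord i j (2 * M i j)).map (rp cs)).prod :=
    (prod_map_alt (rp cs) i j (M i j)).symm
  rw [h1, wact]
  have hprod : π (alternatingWord i j (2 * M i j)) = 1 := by
    rw [cs.prod_alternatingWord_eq_mul_pow]
    rw [if_pos (even_two_mul _)]
    have : 2 * M i j / 2 = M i j := by omega
    rw [this, one_mul, cs.simple_mul_simple_pow]
  rw [hprod]
  have hev := count_ris_alt_even cs i j t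
  rw [Even.neg_one_pow hev]
  simp

/-- The sign homomorphism `W →* Perm (W × ℤˣ)`. -/
def phi : W →* Equiv.Perm (W × ℤˣ) := cs.lift ⟨rp cs, braid cs⟩

theorem phi_wordProd (ω : List B) : phi cs (π ω) = ((ω.map (rp cs)).prod) := by
  induction ω with
  | nil => simp [cs.wordProd_nil]
  | cons i ω ih =>
    rw [cs.wordProd_cons, List.map_cons, List.prod_cons, map_mul, ih]
    congr 1
    exact cs.lift_apply_simple (braid cs) i

theorem count_parity {ω ω' : List B} (t : W) (h : π ω = π ω') :
    (-1 : ℤˣ) ^ ((ris ω).count t) = (-1 : ℤˣ) ^ ((ris ω').count t) := by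
  have h1 : ((ω.map (rp cs)).prod) (t, 1) = ((ω'.map (rp cs)).prod) (t, 1) := by
    rw [← phi_wordProd, ← phi_wordProd, h]
  rw [wact, wact] at h1
  have := congrArg Prod.snd h1
  simpa using this

/-- The (right) exchange condition. -/
theorem exchange {ω : List B} (hred : cs.IsReduced ω) {j : B}
    (hlt : ℓ (π ω * ss j) < ℓ (π ω)) :
    ∃ k, k < ω.length ∧ π (ω.eraseIdx k) = π ω * ss j := by
  obtain ⟨ω₁, h1len, h1prod⟩ := cs.exists_reduced_word (π ω * ss j)
  have hlen' : ℓ (π ω * ss j) + 1 = ℓ (π ω) := by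
    rcases cs.length_mul_simple (π ω) j with h | h
    · omega
    · omega
  set ω₀ := ω₁ ++ [j] with hω₀
  have hprod0 : π ω₀ = π ω := by
    rw [hω₀, cs.wordProd_append, cs.wordProd_singleton, ← h1prod,
      cs.simple_mul_simple_cancel_right]
  have hlen0 : ω₀.length = ℓ (π ω) := by
    rw [hω₀, List.length_append, List.length_singleton,
      ← (show ℓ (π ω₁) = ω₁.length from h1len), ← h1prod, hlen']
  have hred0 : cs.IsReduced ω₀ := by
    unfold CoxeterSystem.IsReduced
    rw [hprod0, hlen0]
  have hmem : ss j ∈ ris ω₀ := by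
    rw [hω₀, ← List.concat_eq_append, cs.rightInvSeq_concat]
    simp
  have hcount0 : (ris ω₀).count (ss j) = 1 :=
    List.count_eq_one_of_mem (hred0.nodup_rightInvSeq) hmem
  have hpar := count_parity cs (ss j) hprod0
  rw [hcount0, pow_one] at hpar
  have hodd : (ris ω).count (ss j) ≠ 0 := by
    intro hc
    rw [hc, pow_zero] at hpar
    exact (by decide : ¬ ((1 : ℤˣ) = -1)) hpar.symm
  have hmem' : ss j ∈ ris ω := List.count_pos_iff.mp (Nat.pos_of_ne_zero hodd)
  obtain ⟨k, hk, hget⟩ := List.mem_iff_getElem.mp hmem'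
  have hk' : k < ω.length := by
    have := cs.length_rightInvSeq ω
    omega
  refine ⟨k, hk', ?_⟩
  have hgetD : (ris ω).getD k 1 = ss j := by
    rw [List.getD_eq_getElem _ _ hk, hget]
  rw [← cs.wordProd_mul_getD_rightInvSeq, hgetD]

end Ex

end EXCHANGE

section WORDS

variable {M : CoxeterMatrix B}

/-- Positions in `[a, b)`, in increasing order. -/
def seg (a b : ℕ) : List ℕ := (List.range (b - a)).map (a + ·)

/-- The positions in `[0, m)` avoiding `I`, in increasing order. -/
def posList (m : ℕ) (I : Finset ℕ) : List ℕ := (List.range m).filter (· ∉ I)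

/-- The positions in `[a, b)` avoiding `I`, in increasing order. -/
def fseg (a b : ℕ) (I : Finset ℕ) : List ℕ := (seg a b).filter (· ∉ I)

/-- The word of `Q` read along a list of positions. -/
def toWord (Q : List B) (l : List ℕ) : List B := l.map (fun k => Q.getD k (arb B))

theorem complWord_eq (Q : List B) (I : Finset ℕ) :
    complWord Q I = toWord Q (posList Q.length I) := rfl

theorem rootFn_eq {W : Type} [Group W] (cs : CoxeterSystem M W)
    (π : Representation ℝ W (B → ℝ)) (Q : List B) (I : Finset ℕ) (j : ℕ) :
    rootFn cs π Q I j
      = π (cs.wordProd (toWord Q (posList j I))) (sroot (Q.getD j (arb B))) := rfl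

theorem mem_seg {a b x : ℕ} : x ∈ seg a b ↔ a ≤ x ∧ x < b := by
  unfold seg
  simp only [List.mem_map, List.mem_range]
  constructor
  · rintro ⟨y, hy, rfl⟩; omega
  · rintro ⟨h1, h2⟩; exact ⟨x - a, by omega, by omega⟩

theorem map_add_seg (a c d : ℕ) : (seg c d).map (a + ·) = seg (a + c) (a + d) := by
  unfold seg
  rw [List.map_map]
  have h1 : a + d - (a + c) = d - c := by omega
  rw [h1]
  apply List.map_congr_left
  intro x _
  simp only [Function.comp_apply]
  omega

theorem range_cut {p b : ℕ} (h : p < b) :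
    List.range b = List.range p ++ p :: seg (p + 1) b := by
  unfold seg
  have h1 : List.range b = List.range (p + 1 + (b - (p + 1))) := by congr 1; omega
  rw [h1, List.range_add, List.range_succ]
  simp [List.append_assoc]

theorem seg_cut {a p b : ℕ} (h1 : a ≤ p) (h2 : p < b) :
    seg a b = seg a p ++ p :: seg (p + 1) b := by
  have h3 : seg a b = (List.range (b - a)).map (a + ·) := rfl
  rw [h3, range_cut (show p - a < b - a by omega), List.map_append, List.map_cons,
    map_add_seg]
  have e1 : a + (p - a) = p := by omega
  have e2 : a + (p - a + 1) = p + 1 := by omega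
  have e3 : a + (b - a) = b := by omega
  rw [e1, e2, e3]
  rfl

theorem filter_notin_congr {l : List ℕ} {I J : Finset ℕ} (h : ∀ x ∈ l, (x ∈ I ↔ x ∈ J)) :
    l.filter (· ∉ I) = l.filter (· ∉ J) := by
  apply List.filter_congr
  intro x hx
  simp only [decide_eq_decide]
  rw [h x hx]

theorem posList_congr {m : ℕ} {I J : Finset ℕ} (h : ∀ x, x < m → (x ∈ I ↔ x ∈ J)) :
    posList m I = posList m J :=
  filter_notin_congr (fun x hx => h x (List.mem_range.mp hx))

theorem fseg_congr {a b : ℕ} {I J : Finset ℕ} (h : ∀ x, a ≤ x → x < b → (x ∈ I ↔ x ∈ J)) :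
    fseg a b I = fseg a b J :=
  filter_notin_congr (fun x hx => h x (mem_seg.mp hx).1 (mem_seg.mp hx).2)

theorem posList_cut_mem {p m : ℕ} {I : Finset ℕ} (h : p < m) (hp : p ∈ I) :
    posList m I = posList p I ++ fseg (p + 1) m I := by
  unfold posList fseg
  rw [range_cut h, List.filter_append, List.filter_cons]
  have hd : (decide (p ∉ I)) = false := by simp [hp]
  rw [hd]
  simp

theorem posList_cut_not {p m : ℕ} {I : Finset ℕ} (h : p < m) (hp : p ∉ I) :
    posList m I = posList p I ++ p :: fseg (p + 1) m I := by
  unfold posList fseg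
  rw [range_cut h, List.filter_append, List.filter_cons]
  have hd : (decide (p ∉ I)) = true := by simp [hp]
  rw [hd]
  simp

theorem fseg_cut_mem {a p b : ℕ} {I : Finset ℕ} (h1 : a ≤ p) (h2 : p < b) (hp : p ∈ I) :
    fseg a b I = fseg a p I ++ fseg (p + 1) b I := by
  unfold fseg
  rw [seg_cut h1 h2, List.filter_append, List.filter_cons]
  have hd : (decide (p ∉ I)) = false := by simp [hp]
  rw [hd]
  simp

theorem fseg_cut_not {a p b : ℕ} {I : Finset ℕ} (h1 : a ≤ p) (h2 : p < b) (hp : p ∉ I) :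
    fseg a b I = fseg a p I ++ p :: fseg (p + 1) b I := by
  unfold fseg
  rw [seg_cut h1 h2, List.filter_append, List.filter_cons]
  have hd : (decide (p ∉ I)) = true := by simp [hp]
  rw [hd]
  simp

theorem toWord_append (Q : List B) (l₁ l₂ : List ℕ) :
    toWord Q (l₁ ++ l₂) = toWord Q l₁ ++ toWord Q l₂ := List.map_append

theorem toWord_cons (Q : List B) (x : ℕ) (l : List ℕ) :
    toWord Q (x :: l) = Q.getD x (arb B) :: toWord Q l := rfl

theorem toWord_prefix {Q R : List B} {l : List ℕ} (h : ∀ x ∈ l, x < Q.length) :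
    toWord (Q ++ R) l = toWord Q l :=
  List.map_congr_left (fun x hx => List.getD_append _ _ _ _ (h x hx))

theorem length_toWord (Q : List B) (l : List ℕ) : (toWord Q l).length = l.length :=
  List.length_map _

theorem mem_posList {m x : ℕ} {I : Finset ℕ} : x ∈ posList m I ↔ x < m ∧ x ∉ I := by
  unfold posList
  simp [List.mem_filter]

theorem mem_fseg {a b x : ℕ} {I : Finset ℕ} : x ∈ fseg a b I ↔ (a ≤ x ∧ x < b) ∧ x ∉ I := by
  unfold fseg
  simp [List.mem_filter, mem_seg]

theorem posList_nodup (m : ℕ) (I : Finset ℕ) : (posList m I).Nodup :=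
  List.Nodup.filter _ (List.nodup_range)

theorem length_filter_add {α : Type*} (p : α → Bool) (l : List α) :
    (l.filter p).length + (l.filter (fun x => !(p x))).length = l.length := by
  induction l with
  | nil => simp
  | cons x xs ih =>
    rw [List.filter_cons, List.filter_cons]
    cases h : p x <;> simp [h, ← ih] <;> omega

theorem posList_length {m : ℕ} {I : Finset ℕ} (h : I ⊆ Finset.range m) :
    (posList m I).length + I.card = m := by
  have h1 := length_filter_add (fun x => decide (x ∉ I)) (List.range m)
  rw [List.length_range] at h1
  have h2 : (List.range m).filter (fun x => !(decide (x ∉ I)))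
      = (List.range m).filter (fun x => decide (x ∈ I)) := by
    apply List.filter_congr
    intro x _
    simp
  rw [h2] at h1
  have h3 : ((List.range m).filter (fun x => decide (x ∈ I))).toFinset = I := by
    ext x
    simp only [List.mem_toFinset, List.mem_filter, List.mem_range, decide_eq_true_eq]
    constructor
    · rintro ⟨_, hx⟩; exact hx
    · intro hx; exact ⟨Finset.mem_range.mp (h hx), hx⟩
  have h4 : I.card = ((List.range m).filter (fun x => decide (x ∈ I))).length := by
    conv_lhs => rw [← h3]
    exact List.toFinset_card_of_nodup (List.Nodup.filter _ (List.nodup_range))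
  rw [h4]
  exact h1

theorem getD_mem' {α : Type*} {l : List α} {n : ℕ} (d : α) (h : n < l.length) :
    l.getD n d ∈ l := by
  rw [List.getD_eq_getElem l d h]
  exact List.getElem_mem h

theorem eraseIdx_map' {α β : Type*} (f : α → β) :
    ∀ (l : List α) (k : ℕ), (l.map f).eraseIdx k = (l.eraseIdx k).map f := by
  intro l
  induction l with
  | nil => intro k; simp
  | cons x xs ih =>
    intro k
    cases k with
    | zero => simp
    | succ k => simp [List.eraseIdx_cons_succ, ih k]

theorem filter_ne_eq_eraseIdx {l : List ℕ} (hnd : l.Nodup) :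
    ∀ {k : ℕ} (h : k < l.length), l.filter (fun x => decide (x ≠ l[k])) = l.eraseIdx k := by
  induction l with
  | nil => intro k h; simp at h
  | cons x xs ih =>
    intro k h
    rcases List.nodup_cons.mp hnd with ⟨hx, hxs⟩
    cases k with
    | zero =>
      simp only [List.getElem_cons_zero, List.eraseIdx_cons_zero, List.filter_cons]
      have hd : (decide (x ≠ x)) = false := by simp
      rw [hd]
      simp only [Bool.false_eq_true, if_false]
      apply List.filter_eq_self.mpr
      intro a ha
      simp only [decide_eq_true_eq]
      intro hax
      exact hx (hax ▸ ha)
    | succ k =>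
      have hk : k < xs.length := by simpa using h
      simp only [List.getElem_cons_succ, List.eraseIdx_cons_succ, List.filter_cons]
      have hd : (decide (x ≠ xs[k])) = true := by
        simp only [decide_eq_true_eq]
        intro hc
        exact hx (hc ▸ List.getElem_mem hk)
      rw [hd]
      simp only [if_true]
      rw [ih hxs hk]

theorem posList_insert (m p : ℕ) (K : Finset ℕ) :
    posList m (insert p K) = (posList m K).filter (fun x => decide (x ≠ p)) := by
  unfold posList
  rw [List.filter_filter]
  apply List.filter_congr
  intro x _
  simp only [Finset.mem_insert, not_or]
  by_cases h1 : x = p <;> by_cases h2 : x ∈ K <;> simp [h1, h2]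

theorem map_getD_range {α : Type*} (l : List α) (d : α) :
    (List.range l.length).map (fun x => l.getD x d) = l := by
  apply List.ext_getElem
  · simp
  · intro i h1 h2
    simp only [List.getElem_map, List.getElem_range]
    exact l.getD_eq_getElem d h2

end WORDS

section CLUSTERS

variable {M : CoxeterMatrix B} {W : Type} [Group W]

/-- Two clusters are adjacent if they differ by exchanging a single position. -/
def Edge (cs : CoxeterSystem M W) (w : W) (Q : List B) (I J : Finset ℕ) : Prop :=
  IsCluster cs w Q I ∧ IsCluster cs w Q J ∧
    ∃ i j, i ∈ I ∧ j ∉ I ∧ i ≠ j ∧ J = insert j (I.erase i)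

variable (cs : CoxeterSystem M W)

theorem edge_symm {w : W} {Q : List B} {I J : Finset ℕ} (h : Edge cs w Q I J) :
    Edge cs w Q J I := by
  obtain ⟨hI, hJ, i, j, hi, hj, hij, hJe⟩ := h
  refine ⟨hJ, hI, j, i, ?_, ?_, hij.symm, ?_⟩
  · rw [hJe]; exact Finset.mem_insert_self _ _
  · rw [hJe, Finset.mem_insert]
    rintro (rfl | hc)
    · exact hij rfl
    · exact (Finset.notMem_erase i I) hc
  · rw [hJe, Finset.erase_insert (fun hc => hj (Finset.mem_of_mem_erase hc)),
      Finset.insert_erase hi]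

theorem complWord_append_mem {Q : List B} {a : B} {I : Finset ℕ} (hm : Q.length ∈ I) :
    complWord (Q ++ [a]) I = complWord Q (I.erase Q.length) := by
  rw [complWord_eq, complWord_eq]
  have hlen : (Q ++ [a]).length = Q.length + 1 := by simp
  rw [hlen]
  have h1 : posList (Q.length + 1) I = posList Q.length I := by
    rw [posList_cut_mem (Nat.lt_succ_self _) hm]
    have h0 : fseg (Q.length + 1) (Q.length + 1) I = [] := by
      unfold fseg seg
      simp
    rw [h0, List.append_nil]
  have h2 : posList Q.length I = posList Q.length (I.erase Q.length) :=
    posList_congr (fun x hx => by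
      rw [Finset.mem_erase]
      constructor
      · intro h'; exact ⟨by omega, h'⟩
      · intro h'; exact h'.2)
  rw [h1, h2]
  apply toWord_prefix
  intro x hx
  exact (mem_posList.mp hx).1

theorem complWord_append_not {Q : List B} {a : B} {I : Finset ℕ} (hm : Q.length ∉ I) :
    complWord (Q ++ [a]) I = complWord Q I ++ [a] := by
  rw [complWord_eq, complWord_eq]
  have hlen : (Q ++ [a]).length = Q.length + 1 := by simp
  rw [hlen]
  have h1 : posList (Q.length + 1) I = posList Q.length I ++ [Q.length] := by
    rw [posList_cut_not (Nat.lt_succ_self _) hm]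
    have h0 : fseg (Q.length + 1) (Q.length + 1) I = [] := by
      unfold fseg seg
      simp
    rw [h0]
  rw [h1, toWord_append]
  congr 1
  · apply toWord_prefix
    intro x hx
    exact (mem_posList.mp hx).1
  · show [(Q ++ [a]).getD Q.length (arb B)] = [a]
    rw [List.getD_append_right _ _ _ _ (le_refl _), Nat.sub_self]
    rfl

theorem cluster_toQ'_mem {w : W} {Q : List B} {a : B} {I : Finset ℕ}
    (hI : IsCluster cs w (Q ++ [a]) I) (hm : Q.length ∈ I) :
    IsCluster cs w Q (I.erase Q.length) := by
  obtain ⟨hsub, hrw⟩ := hI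
  constructor
  · intro x hx
    rw [Finset.mem_erase] at hx
    have := hsub hx.2
    rw [Finset.mem_range] at this ⊢
    simp only [List.length_append, List.length_singleton] at this
    have hxne := hx.1
    omega
  · rw [← complWord_append_mem hm]
    exact hrw

theorem cluster_fromQ'_mem {w : W} {Q : List B} (a : B) {K : Finset ℕ}
    (hK : IsCluster cs w Q K) : IsCluster cs w (Q ++ [a]) (insert Q.length K) := by
  obtain ⟨hsub, hrw⟩ := hK
  have hmK : Q.length ∉ K := fun hc => by
    have := Finset.mem_range.mp (hsub hc); omega
  constructor
  · intro x hx
    rw [Finset.mem_insert] at hx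
    rw [Finset.mem_range]
    simp only [List.length_append, List.length_singleton]
    rcases hx with rfl | hx
    · omega
    · have := Finset.mem_range.mp (hsub hx); omega
  · rw [complWord_append_mem (Finset.mem_insert_self _ _), Finset.erase_insert hmK]
    exact hrw

theorem cluster_toQ'_not {w : W} {Q : List B} {a : B} {I : Finset ℕ}
    (hI : IsCluster cs w (Q ++ [a]) I) (hm : Q.length ∉ I) :
    IsCluster cs (w * cs.simple a) Q I ∧ cs.length (w * cs.simple a) + 1 = cs.length w := by
  obtain ⟨hsub, hprod, hlen⟩ := hI
  rw [complWord_append_not hm] at hprod hlen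
  rw [cs.wordProd_append, cs.wordProd_singleton] at hprod
  have hprod' : cs.wordProd (complWord Q I) = w * cs.simple a := by
    rw [← hprod, mul_assoc, cs.simple_mul_simple_self, mul_one]
  simp only [List.length_append, List.length_singleton] at hlen
  have hle : cs.length (w * cs.simple a) ≤ (complWord Q I).length := by
    rw [← hprod']
    exact cs.length_wordProd_le _
  have hdich := cs.length_mul_simple w a
  have hlen' : (complWord Q I).length = cs.length (w * cs.simple a) := by omega
  have hdesc : cs.length (w * cs.simple a) + 1 = cs.length w := by omega
  refine ⟨⟨?_, hprod', hlen'⟩, hdesc⟩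
  intro x hx
  have := Finset.mem_range.mp (hsub hx)
  rw [Finset.mem_range]
  simp only [List.length_append, List.length_singleton] at this
  have hxne : x ≠ Q.length := fun hc => hm (hc ▸ hx)
  omega

theorem cluster_fromQ'_not {w : W} {Q : List B} {a : B} {K : Finset ℕ}
    (hK : IsCluster cs (w * cs.simple a) Q K)
    (hdesc : cs.length (w * cs.simple a) + 1 = cs.length w) :
    IsCluster cs w (Q ++ [a]) K := by
  obtain ⟨hsub, hprod, hlen⟩ := hK
  have hmK : Q.length ∉ K := fun hc => by
    have := Finset.mem_range.mp (hsub hc); omega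
  refine ⟨?_, ?_, ?_⟩
  · intro x hx
    have := Finset.mem_range.mp (hsub hx)
    rw [Finset.mem_range]
    simp only [List.length_append, List.length_singleton]
    omega
  · rw [complWord_append_not hmK, cs.wordProd_append, cs.wordProd_singleton, hprod,
      mul_assoc, cs.simple_mul_simple_self, mul_one]
  · rw [complWord_append_not hmK]
    simp only [List.length_append, List.length_singleton]
    omega

theorem toWord_eraseIdx (Q : List B) (l : List ℕ) (k : ℕ) :
    toWord Q (l.eraseIdx k) = (toWord Q l).eraseIdx k := (eraseIdx_map' _ l k).symm

theorem cross {w : W} {Q : List B} {a : B} {I : Finset ℕ}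
    (hI : IsCluster cs w (Q ++ [a]) I) (hm : Q.length ∈ I)
    (hdesc : cs.length (w * cs.simple a) + 1 = cs.length w) :
    ∃ J, Edge cs w (Q ++ [a]) I J ∧ Q.length ∉ J := by
  have hK : IsCluster cs w Q (I.erase Q.length) := cluster_toQ'_mem cs hI hm
  set K := I.erase Q.length with hKdef
  set L := posList Q.length K with hLdef
  set ω := complWord Q K with hωdef
  have hωred : cs.IsReduced ω := by
    unfold CoxeterSystem.IsReduced
    rw [hK.2.1, hK.2.2]
  have hlt : cs.length (cs.wordProd ω * cs.simple a) < cs.length (cs.wordProd ω) := by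
    rw [hK.2.1]
    omega
  obtain ⟨k, hk, hprod⟩ := Ex.exchange cs hωred hlt
  have hωL : ω = toWord Q L := by rw [hωdef, hLdef, complWord_eq]
  have hkL : k < L.length := by
    rw [hωL, length_toWord] at hk
    exact hk
  set p := L[k] with hpdef
  have hpmem : p ∈ L := List.getElem_mem hkL
  have hp1 : p < Q.length ∧ p ∉ K := mem_posList.mp hpmem
  have hpI : p ∉ I := fun hc => hp1.2 (Finset.mem_erase.mpr ⟨by omega, hc⟩)
  set J := insert p K with hJdef
  have hJK : IsCluster cs (w * cs.simple a) Q J := by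
    refine ⟨?_, ?_, ?_⟩
    · intro x hx
      rw [Finset.mem_insert] at hx
      rw [Finset.mem_range]
      rcases hx with rfl | hx
      · exact hp1.1
      · exact Finset.mem_range.mp (hK.1 hx)
    · have h5 : posList Q.length J = L.eraseIdx k := by
        rw [hJdef, posList_insert, ← hLdef, hpdef,
          filter_ne_eq_eraseIdx (posList_nodup _ _) hkL]
      rw [complWord_eq, h5, toWord_eraseIdx, ← hωL, hprod, hK.2.1]
    · have h5 : posList Q.length J = L.eraseIdx k := by
        rw [hJdef, posList_insert, ← hLdef, hpdef,
          filter_ne_eq_eraseIdx (posList_nodup _ _) hkL]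
      rw [complWord_eq, h5]
      rw [length_toWord, List.length_eraseIdx, if_pos hkL]
      have hLlen : L.length = cs.length w := by
        rw [← length_toWord Q L, ← hωL]
        exact hK.2.2
      omega
  have hJ : IsCluster cs w (Q ++ [a]) J := cluster_fromQ'_not cs hJK hdesc
  refine ⟨J, ⟨hI, hJ, Q.length, p, hm, hpI, by omega, ?_⟩, ?_⟩
  · rw [hJdef, hKdef]
  · rw [hJdef]
    rw [Finset.mem_insert]
    push_neg
    constructor
    · omega
    · rw [hKdef]
      exact Finset.notMem_erase _ _

theorem conn {Q : List B} : ∀ (w : W) (I I' : Finset ℕ), IsCluster cs w Q I →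
    IsCluster cs w Q I' → Relation.ReflTransGen (Edge cs w Q) I I' := by
  induction Q using List.reverseRecOn with
  | nil =>
    intro w I I' hI hI'
    have h1 : I = ∅ := Finset.subset_empty.mp (by simpa using hI.1)
    have h2 : I' = ∅ := Finset.subset_empty.mp (by simpa using hI'.1)
    rw [h1, h2]
  | append_singleton Q a ih =>
    intro w I I' hI hI'
    have lift1 : ∀ {X Y : Finset ℕ}, Edge cs w Q X Y →
        Edge cs w (Q ++ [a]) (insert Q.length X) (insert Q.length Y) := by
      rintro X Y ⟨hX, hY, i, j, hi, hj, hij, hYe⟩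
      refine ⟨cluster_fromQ'_mem cs a hX, cluster_fromQ'_mem cs a hY, i, j,
        Finset.mem_insert_of_mem hi, ?_, hij, ?_⟩
      · rw [Finset.mem_insert]
        push_neg
        constructor
        · have : j ∈ Y := by rw [hYe]; exact Finset.mem_insert_self _ _
          have := Finset.mem_range.mp (hY.1 this)
          omega
        · exact hj
      · have hine : i ≠ Q.length := by
          have := Finset.mem_range.mp (hX.1 hi); omega
        rw [hYe, Finset.erase_insert_of_ne hine.symm]
        exact Finset.insert_comm _ _ _
    have lift2 : ∀ (hdesc : cs.length (w * cs.simple a) + 1 = cs.length w) {X Y : Finset ℕ},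
        Edge cs (w * cs.simple a) Q X Y → Edge cs w (Q ++ [a]) X Y := by
      rintro hdesc X Y ⟨hX, hY, i, j, hi, hj, hij, hYe⟩
      exact ⟨cluster_fromQ'_not cs hX hdesc, cluster_fromQ'_not cs hY hdesc,
        i, j, hi, hj, hij, hYe⟩
    have conn2 : ∀ (hdesc : cs.length (w * cs.simple a) + 1 = cs.length w) {X Y : Finset ℕ},
        IsCluster cs w (Q ++ [a]) X → Q.length ∉ X → IsCluster cs w (Q ++ [a]) Y →
        Q.length ∉ Y → Relation.ReflTransGen (Edge cs w (Q ++ [a])) X Y := by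
      intro hdesc X Y hX hmX hY hmY
      have p1 := ih (w * cs.simple a) X Y (cluster_toQ'_not cs hX hmX).1
        (cluster_toQ'_not cs hY hmY).1
      exact Relation.ReflTransGen.mono (fun _ _ h => lift2 hdesc h) _ _ p1
    by_cases h1 : Q.length ∈ I <;> by_cases h2 : Q.length ∈ I'
    · have p1 := ih w _ _ (cluster_toQ'_mem cs hI h1) (cluster_toQ'_mem cs hI' h2)
      have p2 := Relation.ReflTransGen.lift (fun K => insert Q.length K)
        (fun _ _ h => lift1 h) _ _ p1
      change Relation.ReflTransGen _ (insert Q.length (I.erase Q.length))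
        (insert Q.length (I'.erase Q.length)) at p2
      rwa [Finset.insert_erase h1, Finset.insert_erase h2] at p2
    · have hdesc := (cluster_toQ'_not cs hI' h2).2
      obtain ⟨J, hedge, hmJ⟩ := cross cs hI h1 hdesc
      exact Relation.ReflTransGen.trans (Relation.ReflTransGen.single hedge)
        (conn2 hdesc hedge.2.1 hmJ hI' h2)
    · have hdesc := (cluster_toQ'_not cs hI h1).2
      obtain ⟨J, hedge, hmJ⟩ := cross cs hI' h2 hdesc
      have p1 := Relation.ReflTransGen.trans (Relation.ReflTransGen.single hedge)
        (conn2 hdesc hedge.2.1 hmJ hI h1)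
      exact (@Relation.ReflTransGen.symmetric _ _ ⟨fun _ _ h => edge_symm cs h⟩).symm _ _ p1
    · exact conn2 (cluster_toQ'_not cs hI h1).2 hI h1 hI' h2

end CLUSTERS

section TRANSPORT

/-- Linear independence (in elementary form) of a family indexed by a finset of positions. -/
def IndepOn (S : Finset ℕ) (F : ℕ → (B → ℝ)) : Prop :=
  ∀ g : ℕ → ℝ, ∑ k ∈ S, g k • F k = 0 → ∀ k ∈ S, g k = 0

theorem indepOn_iff (S : Finset ℕ) (F : ℕ → (B → ℝ)) :
    LinearIndependent ℝ (fun k : S => F k) ↔ IndepOn S F := by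
  rw [Fintype.linearIndependent_iff]
  constructor
  · intro h g hg k hk
    exact h (fun k : S => g k) (by rw [Finset.sum_coe_sort S (fun k => g k • F k)]; exact hg)
      ⟨k, hk⟩
  · intro h g hg k
    set g' : ℕ → ℝ := fun n => if hn : n ∈ S then g ⟨n, hn⟩ else 0 with hg'
    have hsum : ∑ n ∈ S, g' n • F n = 0 := by
      rw [← Finset.sum_coe_sort S (fun n => g' n • F n)]
      rw [← hg]
      apply Finset.sum_congr rfl
      intro i _
      simp only [hg', i.2, dif_pos]
    have := h g' hsum k k.2
    simpa only [hg', k.2, dif_pos] using this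

variable {F G : ℕ → (B → ℝ)} {I J : Finset ℕ} {i j : ℕ} {c : ℕ → ℝ} {ε : ℝ}

theorem sum_GF (hrel : ∀ k ∈ I, k ≠ i → G k = F k + c k • F i) (g : ℕ → ℝ) :
    ∑ k ∈ I.erase i, g k • G k
      = ∑ k ∈ I.erase i, g k • F k + (∑ k ∈ I.erase i, g k * c k) • F i := by
  rw [Finset.sum_smul, ← Finset.sum_add_distrib]
  apply Finset.sum_congr rfl
  intro k hk'
  rw [hrel k (Finset.mem_of_mem_erase hk') (Finset.ne_of_mem_erase hk'), smul_add,
    smul_smul]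

theorem transport_fwd (hi : i ∈ I) (hj : j ∉ I) (hJ : J = insert j (I.erase i))
    (hrel : ∀ k ∈ I, k ≠ i → G k = F k + c k • F i)
    (hε : ε ≠ 0) (hGj : G j = ε • F i) :
    IndepOn I F → IndepOn J G := by
  intro hIF g hg k hk
  have hjI : j ∉ I.erase i := fun hc => hj (Finset.mem_of_mem_erase hc)
  rw [hJ, Finset.sum_insert hjI, sum_GF hrel g] at hg
  set D : ℝ := g j * ε + ∑ k ∈ I.erase i, g k * c k with hD
  have htot : ∑ n ∈ I, (fun n => if n = i then D else g n) n • F n = 0 := by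
    rw [← Finset.insert_erase hi, Finset.sum_insert (Finset.notMem_erase i I)]
    have h1 : ∑ n ∈ I.erase i, (fun n => if n = i then D else g n) n • F n
        = ∑ n ∈ I.erase i, g n • F n := by
      apply Finset.sum_congr rfl
      intro n hn
      simp only [if_neg (Finset.ne_of_mem_erase hn)]
    rw [h1]
    simp only [eq_self_iff_true, if_true]
    rw [hGj, smul_smul] at hg
    rw [hD, add_smul]
    rw [← hg]
    abel
  have hall := hIF _ htot
  have hzero : ∀ n ∈ I.erase i, g n = 0 := by
    intro n hn
    have := hall n (Finset.mem_of_mem_erase hn)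
    simpa only [if_neg (Finset.ne_of_mem_erase hn)] using this
  rw [hJ, Finset.mem_insert] at hk
  rcases hk with rfl | hk
  · have hDz := hall i hi
    simp only [eq_self_iff_true, if_true] at hDz
    rw [hD] at hDz
    have hs : ∑ k ∈ I.erase i, g k * c k = 0 :=
      Finset.sum_eq_zero (fun n hn => by rw [hzero n hn, zero_mul])
    rw [hs, add_zero] at hDz
    exact (mul_eq_zero.mp hDz).resolve_right hε
  · exact hzero k hk

theorem transport_bwd (hi : i ∈ I) (hj : j ∉ I) (hJ : J = insert j (I.erase i))
    (hrel : ∀ k ∈ I, k ≠ i → G k = F k + c k • F i)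
    (hε : ε ≠ 0) (hGj : G j = ε • F i) :
    IndepOn J G → IndepOn I F := by
  intro hJG g hg k hk
  have hjI : j ∉ I.erase i := fun hc => hj (Finset.mem_of_mem_erase hc)
  rw [← Finset.insert_erase hi, Finset.sum_insert (Finset.notMem_erase i I)] at hg
  have hFi : ε⁻¹ • G j = F i := by rw [hGj, smul_smul, inv_mul_cancel₀ hε, one_smul]
  set C : ℝ := ∑ k ∈ I.erase i, g k * c k with hC
  set D : ℝ := (g i - C) * ε⁻¹ with hD
  have htot : ∑ n ∈ J, (fun n => if n = j then D else g n) n • G n = 0 := by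
    rw [hJ, Finset.sum_insert hjI]
    have h1 : ∑ n ∈ I.erase i, (fun n => if n = j then D else g n) n • G n
        = ∑ n ∈ I.erase i, g n • G n := by
      apply Finset.sum_congr rfl
      intro n hn
      have hnj : n ≠ j := fun hc => hj (hc ▸ Finset.mem_of_mem_erase hn)
      simp only [if_neg hnj]
    rw [h1, sum_GF hrel g]
    simp only [eq_self_iff_true, if_true]
    have h2 : D • G j = (g i - C) • F i := by
      rw [hD, mul_smul, hFi]
    rw [h2, sub_smul]
    rw [← hg]
    abel
  have hall := hJG _ htot
  have hzero : ∀ n ∈ I.erase i, g n = 0 := by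
    intro n hn
    have hnj : n ≠ j := fun hc => hj (hc ▸ Finset.mem_of_mem_erase hn)
    have := hall n (by rw [hJ]; exact Finset.mem_insert_of_mem hn)
    simpa only [if_neg hnj] using this
  rcases eq_or_ne k i with rfl | hki
  · have hDz := hall j (by rw [hJ]; exact Finset.mem_insert_self _ _)
    simp only [eq_self_iff_true, if_true] at hDz
    rw [hD] at hDz
    have hCz : C = 0 := by
      rw [hC]
      exact Finset.sum_eq_zero (fun n hn => by rw [hzero n hn, zero_mul])
    rw [hCz, sub_zero] at hDz
    rcases mul_eq_zero.mp hDz with h | h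
    · exact h
    · exact absurd h (inv_ne_zero hε)
  · exact hzero k (Finset.mem_erase.mpr ⟨hki, hk⟩)

end TRANSPORT

section ROOTS

variable {M : CoxeterMatrix B} {W : Type} [Group W]
variable (cs : CoxeterSystem M W) (rep : Representation ℝ W (B → ℝ))

theorem sroot_ne_zero (i : B) : sroot i ≠ 0 := by
  intro hc
  have h := congrFun hc i
  unfold sroot at h
  simp at h

theorem bil_sroot_self (i : B) : bil M (sroot i) (sroot i) = 1 := by
  unfold bil sroot
  rw [Finset.sum_eq_single i]
  · rw [Finset.sum_eq_single i]
    · rw [M.diagonal i]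
      simp [Real.cos_pi]
    · intro b _ hb
      simp [Pi.single_eq_of_ne hb]
    · intro h; exact absurd (Finset.mem_univ i) h
  · intro a _ ha
    apply Finset.sum_eq_zero
    intro b _
    simp [Pi.single_eq_of_ne ha]
  · intro h; exact absurd (Finset.mem_univ i) h

theorem rep_mul_apply (x y : W) (v : B → ℝ) : rep (x * y) v = rep x (rep y v) := by
  rw [map_mul]
  rfl

theorem rep_inv_apply (x : W) (v : B → ℝ) : rep x (rep x⁻¹ v) = v := by
  rw [← rep_mul_apply, mul_inv_cancel, map_one]
  rfl

theorem wordProd_toWord_append (Q : List B) (l1 l2 : List ℕ) :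
    cs.wordProd (toWord Q (l1 ++ l2))
      = cs.wordProd (toWord Q l1) * cs.wordProd (toWord Q l2) := by
  rw [toWord_append, cs.wordProd_append]

theorem wordProd_toWord_cons (Q : List B) (x : ℕ) (l : List ℕ) :
    cs.wordProd (toWord Q (x :: l))
      = cs.simple (Q.getD x (arb B)) * cs.wordProd (toWord Q l) := by
  rw [toWord_cons, cs.wordProd_cons]

variable (hgeom : ∀ (i : B) (v : B → ℝ),
    rep (cs.simple i) v = v - (2 * bil M (sroot i) v) • sroot i)

include hgeom

theorem conj_simple_apply (v : W) (b : B) (x : B → ℝ) :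
    rep (v * cs.simple b * v⁻¹) x
      = x - (2 * bil M (sroot b) (rep v⁻¹ x)) • (rep v (sroot b)) := by
  rw [rep_mul_apply, rep_mul_apply, hgeom, map_sub, map_smul, rep_inv_apply]

theorem simple_apply_self_root (b : B) : rep (cs.simple b) (sroot b) = -(sroot b) := by
  rw [hgeom, bil_sroot_self, mul_one, two_smul]
  abel

theorem conj_letter {u : W} {bj bi : B} (h : u * cs.simple bj = cs.simple bi * u) :
    ∃ γc : ℝ, γc ≠ 0 ∧ rep u (sroot bj) = γc • sroot bi := by
  have hconj : u * cs.simple bj * u⁻¹ = cs.simple bi := by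
    rw [h, mul_assoc, mul_inv_cancel, mul_one]
  have hop : ∀ x : B → ℝ,
      x - (2 * bil M (sroot bj) (rep u⁻¹ x)) • (rep u (sroot bj))
        = x - (2 * bil M (sroot bi) x) • sroot bi := by
    intro x
    rw [← conj_simple_apply cs rep hgeom, hconj, hgeom]
  have h5 : (2 * bil M (sroot bj) (rep u⁻¹ (sroot bi))) • (rep u (sroot bj))
      = (2 * bil M (sroot bi) (sroot bi)) • sroot bi := by
    exact sub_right_inj.mp (hop (sroot bi))
  rw [bil_sroot_self] at h5
  set c0 : ℝ := 2 * bil M (sroot bj) (rep u⁻¹ (sroot bi)) with hc0def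
  have hc0 : c0 ≠ 0 := by
    intro hc
    rw [hc, zero_smul] at h5
    have : sroot bi = (0 : B → ℝ) := by
      have h7 := h5.symm
      rwa [smul_eq_zero_iff_right (by norm_num : (2 : ℝ) * 1 ≠ 0)] at h7
    exact sroot_ne_zero bi this
  refine ⟨c0⁻¹ * (2 * 1), by norm_num [hc0], ?_⟩
  have h8 : rep u (sroot bj) = c0⁻¹ • (c0 • rep u (sroot bj)) := by
    rw [smul_smul, inv_mul_cancel₀ hc0, one_smul]
  rw [h8, h5, smul_smul]

theorem rels {w : W} {Q : List B} {I J : Finset ℕ} {i j : ℕ}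
    (hij : i < j) (hi : i ∈ I) (hj : j ∉ I) (hJ : J = insert j (I.erase i))
    (hIc : IsCluster cs w Q I) (hJc : IsCluster cs w Q J) :
    (∀ k ∈ I, k ≠ i → ∃ ck : ℝ,
        rootFn cs rep Q J k = rootFn cs rep Q I k + ck • rootFn cs rep Q I i)
    ∧ ∃ ε : ℝ, ε ≠ 0 ∧ rootFn cs rep Q J j = ε • rootFn cs rep Q I i := by
  have hiJ : i ∉ J := by
    rw [hJ, Finset.mem_insert]
    push_neg
    exact ⟨by omega, Finset.notMem_erase i I⟩
  have hjJ : j ∈ J := by rw [hJ]; exact Finset.mem_insert_self _ _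
  have him : i < Q.length := Finset.mem_range.mp (hIc.1 hi)
  have hjm : j < Q.length := Finset.mem_range.mp (hJc.1 hjJ)
  -- membership congruences
  have hmemJI : ∀ x, x ≠ i → x ≠ j → (x ∈ J ↔ x ∈ I) := by
    intro x hxi hxj
    rw [hJ, Finset.mem_insert, Finset.mem_erase]
    constructor
    · rintro (rfl | ⟨_, h⟩)
      · exact absurd rfl hxj
      · exact h
    · intro hxI
      exact Or.inr ⟨hxi, hxI⟩
  have hposlt : ∀ b, b ≤ i → posList b J = posList b I :=
    fun b hb => posList_congr (fun x hx => hmemJI x (by omega) (by omega))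
  have hfseg1 : ∀ b, b ≤ j → fseg (i + 1) b J = fseg (i + 1) b I :=
    fun b hb => fseg_congr (fun x h1 h2 => hmemJI x (by omega) (by omega))
  have hfseg2 : ∀ a b, j < a → fseg a b J = fseg a b I :=
    fun a b ha => fseg_congr (fun x h1 h2 => hmemJI x (by omega) (by omega))
  -- names
  set qi := Q.getD i (arb B) with hqi
  set qj := Q.getD j (arb B) with hqj
  set v := cs.wordProd (toWord Q (posList i I)) with hv
  set u := cs.wordProd (toWord Q (fseg (i + 1) j I)) with hu
  have hri : rootFn cs rep Q I i = rep v (sroot qi) := by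
    rw [rootFn_eq]
  -- decompositions beyond j
  have dI' : ∀ k, j < k → posList k I
      = posList i I ++ (fseg (i + 1) j I ++ j :: fseg (j + 1) k I) := by
    intro k hk
    rw [posList_cut_mem (by omega) hi, fseg_cut_not (by omega) (by omega) hj]
  have dJ' : ∀ k, j < k → posList k J
      = posList i I ++ (i :: (fseg (i + 1) j I ++ fseg (j + 1) k J)) := by
    intro k hk
    rw [posList_cut_not (by omega) hiJ, hposlt i le_rfl,
      fseg_cut_mem (by omega) (by omega) hjJ, hfseg1 j le_rfl]
  -- the key commutation identity
  have key : u * cs.simple qj = cs.simple qi * u := by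
    have hwI := hIc.2.1
    have hwJ := hJc.2.1
    rw [complWord_eq, dI' Q.length hjm, wordProd_toWord_append cs,
      wordProd_toWord_append cs, wordProd_toWord_cons cs] at hwI
    rw [complWord_eq, dJ' Q.length hjm, wordProd_toWord_append cs,
      wordProd_toWord_cons cs, wordProd_toWord_append cs,
      hfseg2 (j + 1) Q.length (by omega)] at hwJ
    rw [← hwJ] at hwI
    have h1 := mul_left_cancel hwI
    rw [← mul_assoc, ← mul_assoc] at h1
    exact mul_right_cancel h1
  refine ⟨?_, ?_⟩
  · -- relations for k ∈ I, k ≠ i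
    intro k hk hki
    have hkj : k ≠ j := fun hc => hj (hc ▸ hk)
    rcases lt_trichotomy k i with hlt | heq | hgt
    · -- k < i
      refine ⟨0, ?_⟩
      rw [zero_smul, add_zero, rootFn_eq, rootFn_eq, hposlt k (by omega)]
    · exact absurd heq hki
    · rcases lt_or_gt_of_ne hkj with hkj' | hkj'
      · -- i < k < j
        have dIk : posList k I = posList i I ++ fseg (i + 1) k I :=
          posList_cut_mem (by omega) hi
        have dJk : posList k J = posList i I ++ i :: fseg (i + 1) k I := by
          rw [posList_cut_not (by omega) hiJ, hposlt i le_rfl, hfseg1 k (by omega)]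
        have hPJ : cs.wordProd (toWord Q (posList k J))
            = (v * cs.simple qi * v⁻¹) * cs.wordProd (toWord Q (posList k I)) := by
          rw [dIk, dJk, wordProd_toWord_append cs, wordProd_toWord_cons cs,
            wordProd_toWord_append cs, ← hv, ← hqi]
          group
        refine ⟨-(2 * bil M (sroot qi) (rep v⁻¹ (rootFn cs rep Q I k))), ?_⟩
        rw [rootFn_eq cs rep Q J k, hPJ, rep_mul_apply,
          conj_simple_apply cs rep hgeom, ← rootFn_eq, hri, neg_smul, ← sub_eq_add_neg]
      · -- j < k
        have hPI : cs.wordProd (toWord Q (posList k I))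
            = v * (u * (cs.simple qj * cs.wordProd (toWord Q (fseg (j + 1) k I)))) := by
          rw [dI' k (by omega), wordProd_toWord_append cs, wordProd_toWord_append cs,
            wordProd_toWord_cons cs, ← hv, ← hu, ← hqj]
        have hPJ : cs.wordProd (toWord Q (posList k J))
            = v * (cs.simple qi * (u * cs.wordProd (toWord Q (fseg (j + 1) k I)))) := by
          rw [dJ' k (by omega), hfseg2 (j + 1) k (by omega), wordProd_toWord_append cs,
            wordProd_toWord_cons cs, wordProd_toWord_append cs, ← hv, ← hu, ← hqi]
        have hXY : v * (cs.simple qi * (u * cs.wordProd (toWord Q (fseg (j + 1) k I))))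
            = v * (u * (cs.simple qj * cs.wordProd (toWord Q (fseg (j + 1) k I)))) := by
          rw [show cs.simple qi * (u * cs.wordProd (toWord Q (fseg (j + 1) k I)))
              = (cs.simple qi * u) * cs.wordProd (toWord Q (fseg (j + 1) k I)) from
            (mul_assoc _ _ _).symm, ← key, mul_assoc]
        refine ⟨0, ?_⟩
        rw [zero_smul, add_zero, rootFn_eq, rootFn_eq, hPI, hPJ, hXY]
  · -- the j-th root
    have dJj : posList j J = posList i I ++ i :: fseg (i + 1) j I := by
      rw [posList_cut_not (by omega) hiJ, hposlt i le_rfl, hfseg1 j le_rfl]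
    obtain ⟨γc, hγ0, hγ⟩ := conj_letter cs rep hgeom key
    refine ⟨-γc, by simpa using hγ0, ?_⟩
    rw [rootFn_eq cs rep Q J j, dJj, wordProd_toWord_append cs, wordProd_toWord_cons cs,
      ← hv, ← hqi, ← hqj, ← hu, rep_mul_apply, rep_mul_apply, hγ, map_smul, map_smul,
      simple_apply_self_root cs rep hgeom, hri]
    rw [map_neg, smul_neg, ← neg_smul]

end ROOTS

section GREEDY

variable {M : CoxeterMatrix B} {W : Type} [Group W] (cs : CoxeterSystem M W)

theorem posList_range_greedy (n N : ℕ) :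
    posList (n + N) (Finset.range n) = seg n (n + N) := by
  unfold posList seg
  rw [List.range_add, List.filter_append]
  have h1 : (List.range n).filter (· ∉ Finset.range n) = [] := by
    apply List.filter_eq_nil_iff.mpr
    intro x hx
    simp [Finset.mem_range, List.mem_range.mp hx]
  have h2 : ((List.range N).map (fun x => n + x)).filter (· ∉ Finset.range n)
      = (List.range N).map (fun x => n + x) := by
    apply List.filter_eq_self.mpr
    intro a ha
    obtain ⟨x, _, rfl⟩ := List.mem_map.mp ha
    simp [Finset.mem_range]
  rw [h1, h2, List.nil_append]
  have h3 : n + N - n = N := by omega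
  rw [h3]

theorem complWord_greedy (cword sw : List B) :
    complWord (cword ++ sw) (Finset.range cword.length) = sw := by
  rw [complWord_eq, List.length_append, posList_range_greedy]
  unfold toWord seg
  have h1 : cword.length + sw.length - cword.length = sw.length := by omega
  rw [h1, List.map_map]
  have h3 : (List.range sw.length).map
        ((fun k => (cword ++ sw).getD k (arb B)) ∘ (fun x => cword.length + x))
      = (List.range sw.length).map (fun x => sw.getD x (arb B)) := by
    apply List.map_congr_left
    intro x _
    simp only [Function.comp_apply]
    rw [List.getD_append_right _ _ _ _ (by omega), Nat.add_sub_cancel_left]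
  rw [h3, map_getD_range]

theorem greedy_cluster {w₀ : W} {cword sw : List B} (hsw : IsRW cs w₀ sw) :
    IsCluster cs w₀ (cword ++ sw) (Finset.range cword.length) := by
  constructor
  · intro x hx
    rw [Finset.mem_range] at hx ⊢
    rw [List.length_append]
    omega
  · rw [complWord_greedy]
    exact hsw

theorem greedy_root (rep : Representation ℝ W (B → ℝ)) (cword sw : List B) {k : ℕ}
    (hk : k < cword.length) :
    rootFn cs rep (cword ++ sw) (Finset.range cword.length) k
      = sroot (cword.getD k (arb B)) := by
  rw [rootFn_eq]
  have h1 : posList k (Finset.range cword.length) = [] := by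
    apply List.filter_eq_nil_iff.mpr
    intro x hx
    have := List.mem_range.mp hx
    simp [Finset.mem_range]
    omega
  have h2 : (cword ++ sw).getD k (arb B) = cword.getD k (arb B) :=
    List.getD_append _ _ _ _ hk
  rw [h1, h2]
  show rep (cs.wordProd (toWord (cword ++ sw) [])) _ = _
  rw [show toWord (cword ++ sw) ([] : List ℕ) = [] from rfl, cs.wordProd_nil, map_one]
  rfl

theorem greedy_indep {cword : List B} (hnd : cword.Nodup) :
    IndepOn (Finset.range cword.length) (fun k => sroot (cword.getD k (arb B))) := by
  intro g hg k hk
  rw [Finset.mem_range] at hk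
  have hb := congrFun hg (cword.getD k (arb B))
  rw [Finset.sum_apply] at hb
  unfold sroot at hb
  simp only [Pi.smul_apply, smul_eq_mul, Pi.zero_apply] at hb
  rw [Finset.sum_eq_single k] at hb
  · rw [Pi.single_eq_same, mul_one] at hb
    exact hb
  · intro x hx hxk
    rw [Finset.mem_range] at hx
    rw [Pi.single_apply, if_neg, mul_zero]
    intro hc
    apply hxk
    rw [List.getD_eq_getElem _ _ (by omega : k < cword.length),
      List.getD_eq_getElem _ _ (by omega : x < cword.length)] at hc
    exact (List.Nodup.getElem_inj_iff hnd).mp hc.symm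
  · intro hc
    exact absurd (Finset.mem_range.mpr hk) hc

end GREEDY

-- AUXEND

theorem statement_18
    {B : Type} [DecidableEq B] [Fintype B] [Nonempty B]
    {M : CoxeterMatrix B} {W : Type} [Group W] [Finite W]
    (cs : CoxeterSystem M W)
    (hcrys : ∀ i j : B, i ≠ j → M i j ∈ ({2, 3, 4, 6} : Set ℕ))
    (π : Representation ℝ W (B → ℝ))
    (hgeom : ∀ (i : B) (v : B → ℝ),
      π (cs.simple i) v = v - (2 * bil M (sroot i) v) • sroot i)
    (w₀ : W)
    (hw₀max : ∀ w : W, cs.length w ≤ cs.length w₀)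
    (hw₀uniq : ∀ w : W, cs.length w = cs.length w₀ → w = w₀)
    (cword : List B) (hcnodup : cword.Nodup) (hcfull : ∀ i : B, i ∈ cword)
    (sw : List B) (hsw : IsRW cs w₀ sw)
    (pos : Fin sw.length → ℕ) (hposmono : StrictMono pos)
    (hposlet : ∀ k : Fin sw.length, sw.get k = cInf cword (pos k))
    (hposlex : ∀ g : Fin sw.length → ℕ, StrictMono g →
      IsRW cs w₀ (List.ofFn fun k => cInf cword (g k)) → LexLE pos g)
    (I : Finset ℕ) (hI : IsCluster cs w₀ (cword ++ sw) I) :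
    LinearIndependent ℝ (fun i : I => rootFn cs π (cword ++ sw) I (i : ℕ)) ∧
      Submodule.span ℝ (Set.range (fun i : I => rootFn cs π (cword ++ sw) I (i : ℕ))) = ⊤ ∧
      (∀ i ∈ I, ∀ j ∈ I, rootFn cs π (cword ++ sw) I i = rootFn cs π (cword ++ sw) I j → i = j) := by
  classical
  have hpath := conn cs w₀ (Finset.range cword.length) I (greedy_cluster cs hsw) hI
  -- transport of independence along an edge
  have htrans : ∀ X Y : Finset ℕ, Edge cs w₀ (cword ++ sw) X Y →
      IndepOn X (fun k => rootFn cs π (cword ++ sw) X k) →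
      IndepOn Y (fun k => rootFn cs π (cword ++ sw) Y k) := by
    rintro X Y ⟨hX, hY, i, j, hi, hj, hij, hYe⟩
    rcases lt_or_gt_of_ne hij with hlt | hgt
    · obtain ⟨hrel, ε, hε, hεe⟩ := rels cs π hgeom hlt hi hj hYe hX hY
      set c : ℕ → ℝ := fun k => if h : k ∈ X ∧ k ≠ i then
        Classical.choose (hrel k h.1 h.2) else 0 with hcdef
      have hc : ∀ k ∈ X, k ≠ i → rootFn cs π (cword ++ sw) Y k
          = rootFn cs π (cword ++ sw) X k + c k • rootFn cs π (cword ++ sw) X i := by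
        intro k hk hki
        have hspec := Classical.choose_spec (hrel k hk hki)
        rw [hcdef]
        simp only [dif_pos (And.intro hk hki)]
        exact hspec
      exact transport_fwd hi hj hYe hc hε hεe
    · -- j < i : swap roles
      have hjY : j ∈ Y := by rw [hYe]; exact Finset.mem_insert_self _ _
      have hiY : i ∉ Y := by
        rw [hYe, Finset.mem_insert]
        push_neg
        exact ⟨by omega, Finset.notMem_erase i X⟩
      have hXe : X = insert i (Y.erase j) := by
        rw [hYe, Finset.erase_insert (fun hc => hj (Finset.mem_of_mem_erase hc)),
          Finset.insert_erase hi]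
      obtain ⟨hrel, ε, hε, hεe⟩ := rels cs π hgeom hgt hjY hiY hXe hY hX
      set c : ℕ → ℝ := fun k => if h : k ∈ Y ∧ k ≠ j then
        Classical.choose (hrel k h.1 h.2) else 0 with hcdef
      have hc : ∀ k ∈ Y, k ≠ j → rootFn cs π (cword ++ sw) X k
          = rootFn cs π (cword ++ sw) Y k + c k • rootFn cs π (cword ++ sw) Y j := by
        intro k hk hkj
        have hspec := Classical.choose_spec (hrel k hk hkj)
        rw [hcdef]
        simp only [dif_pos (And.intro hk hkj)]
        exact hspec
      exact transport_bwd hjY hiY hXe hc hε hεe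
  -- independence of the greedy root configuration
  have hindep0 : IndepOn (Finset.range cword.length)
      (fun k => rootFn cs π (cword ++ sw) (Finset.range cword.length) k) := by
    intro g hg k hk
    apply greedy_indep hcnodup g ?_ k hk
    rw [← hg]
    apply Finset.sum_congr rfl
    intro x hx
    dsimp only
    rw [greedy_root cs π cword sw (Finset.mem_range.mp hx)]
  -- propagate independence along the path
  have hprop : ∀ X Y : Finset ℕ, Relation.ReflTransGen (Edge cs w₀ (cword ++ sw)) X Y →
      IndepOn X (fun k => rootFn cs π (cword ++ sw) X k) →
      IndepOn Y (fun k => rootFn cs π (cword ++ sw) Y k) := by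
    intro X Y hXY
    induction hXY with
    | refl => exact id
    | tail _ hedge ih => exact fun h0 => htrans _ _ hedge (ih h0)
  have hindep := hprop _ _ hpath hindep0
  have hli : LinearIndependent ℝ (fun i : I => rootFn cs π (cword ++ sw) I (i : ℕ)) :=
    (indepOn_iff I (fun k => rootFn cs π (cword ++ sw) I k)).mpr hindep
  -- cardinality of I
  have hcard : I.card = cword.length := by
    have h1 := posList_length (show I ⊆ Finset.range (cword ++ sw).length from hI.1)
    have h2 : (posList (cword ++ sw).length I).length = cs.length w₀ := by
      have h := hI.2.2
      rwa [complWord_eq, length_toWord] at h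
    have h3 : sw.length = cs.length w₀ := hsw.2
    have h4 : (cword ++ sw).length = cword.length + sw.length := List.length_append
    omega
  have hcardB : cword.length = Fintype.card B := by
    have h1 : cword.toFinset = Finset.univ := by
      ext x
      simp [hcfull x]
    have h2 := List.toFinset_card_of_nodup hcnodup
    rw [h1, Finset.card_univ] at h2
    omega
  have hfin : Fintype.card ↑I = Module.finrank ℝ (B → ℝ) := by
    rw [Module.finrank_pi, Fintype.card_coe, hcard, hcardB]
  have hIne : I.Nonempty := by
    rw [← Finset.card_pos, hcard, hcardB]
    exact Fintype.card_pos
  haveI : Nonempty ↑I := Finset.nonempty_coe_sort.mpr hIne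
  refine ⟨hli, ?_, ?_⟩
  · have hb := coe_basisOfLinearIndependentOfCardEqFinrank hli hfin
    rw [← hb]
    exact Module.Basis.span_eq _
  · intro i hi j hj heq
    have := hli.injective (a₁ := ⟨i, hi⟩) (a₂ := ⟨j, hj⟩) heq
    exact congrArg Subtype.val this

end CP
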